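/- Let U ∈ B(H₁,H₂), Φ and Ψ be Bessel sequences in H₂ and H₁. If G_{U,Φ,Ψ} has a bounded right inverse on ℓ², then Φ and U*Φ are Riesz sequences. If moreover Φ is complete (upper semi-frame), then Φ is a Riesz basis and UΨ is a frame for H₂. -/

import Mathlib

open ContinuousLinearMap

noncomputable section

/-- ℓ² over a countable index set. -/
abbrev L2 : Type := lp (fun _ : ℕ => ℂ) 2

private lemma sq_aux {a b K : ℝ} (hK : 0 < K) (h : a ≤ K * b) (ha : 0 ≤ a) (_hb : 0 ≤ b) :
    (1 / K ^ 2) * a ^ 2 ≤ b ^ 2 := by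
  rw [div_mul_eq_mul_div, div_le_iff₀ (by positivity)]
  nlinarith

private lemma norm_le_of_sq {E F : Type*} [NormedAddCommGroup E] [NormedAddCommGroup F]
    {c : E} {d : F} {M : ℝ} (hM : 0 < M) (h : ‖c‖ ^ 2 ≤ ‖d‖ * (M * ‖c‖)) :
    ‖c‖ ≤ M * ‖d‖ := by
  rcases eq_or_lt_of_le (norm_nonneg c) with h0 | h0
  · rw [← h0]; positivity
  · have : ‖c‖ * ‖c‖ ≤ (M * ‖d‖) * ‖c‖ := by nlinarith
    exact le_of_mul_le_mul_right this h0

set_option maxHeartbeats 1600000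

/-- if `G_{U,Φ,Ψ}` has a bounded right inverse, then `Φ` and `U*Φ` are
Riesz sequences; if moreover `Φ` is complete (upper semi-frame), then `Φ` is a Riesz
basis and `UΨ` is a frame for `H₂`. -/
theorem stmt_14
    {H1 H2 : Type} [NormedAddCommGroup H1] [InnerProductSpace ℂ H1] [CompleteSpace H1]
    [NormedAddCommGroup H2] [InnerProductSpace ℂ H2] [CompleteSpace H2]
    (Φ : ℕ → H2) (Ψ : ℕ → H1)
    (TΦ : L2 →L[ℂ] H2) (TΨ : L2 →L[ℂ] H1)
    (hΦ : ∀ i, TΦ (lp.single 2 i 1) = Φ i)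
    (hΨ : ∀ i, TΨ (lp.single 2 i 1) = Ψ i)
    (U : H1 →L[ℂ] H2)
    (R : L2 →L[ℂ] L2)
    (hR : (adjoint TΦ ∘L U ∘L TΨ) ∘L R = ContinuousLinearMap.id ℂ L2) :
    (∃ A > (0 : ℝ), ∀ c : L2, A * ‖c‖ ^ 2 ≤ ‖TΦ c‖ ^ 2) ∧
    (∃ A > (0 : ℝ), ∀ c : L2, A * ‖c‖ ^ 2 ≤ ‖(adjoint U ∘L TΦ) c‖ ^ 2) ∧
    (DenseRange ⇑TΦ →
      Function.Bijective ⇑TΦ ∧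
        ∃ A > (0 : ℝ), ∀ f : H2, A * ‖f‖ ^ 2 ≤ ‖adjoint (U ∘L TΨ) f‖ ^ 2) := by
  -- pointwise form of hR
  have hRc : ∀ c : L2, adjoint TΦ (U (TΨ (R c))) = c := by
    intro c
    have := congrArg (fun T : L2 →L[ℂ] L2 => T c) hR
    simpa using this
  -- key inner product identity
  have key : ∀ c : L2, ‖c‖ ^ 2 = ‖(inner ℂ (TΦ c) (U (TΨ (R c))) : ℂ)‖ := by
    intro c
    have h1 : (inner ℂ c c : ℂ) = inner ℂ (TΦ c) (U (TΨ (R c))) := by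
      rw [← adjoint_inner_right, hRc c]
    have h2 : (inner ℂ c c : ℂ) = (‖c‖ : ℂ) ^ 2 := inner_self_eq_norm_sq_to_K c
    rw [← h1, h2]
    simp [← Complex.ofReal_pow]
  -- Part 1 : TΦ bounded below
  set M1 : ℝ := ‖U ∘L TΨ ∘L R‖ + 1 with hM1def
  have hM1 : 0 < M1 := by positivity
  have hb1 : ∀ c : L2, ‖c‖ ≤ M1 * ‖TΦ c‖ := by
    intro c
    apply norm_le_of_sq hM1
    calc ‖c‖ ^ 2 = ‖(inner ℂ (TΦ c) (U (TΨ (R c))) : ℂ)‖ := key c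
      _ ≤ ‖TΦ c‖ * ‖U (TΨ (R c))‖ := norm_inner_le_norm _ _
      _ ≤ ‖TΦ c‖ * (M1 * ‖c‖) := by
          refine mul_le_mul_of_nonneg_left ?_ (norm_nonneg _)
          have := (U ∘L TΨ ∘L R).le_opNorm c
          simp only [comp_apply] at this
          refine this.trans ?_
          have : (0:ℝ) ≤ ‖c‖ := norm_nonneg c
          nlinarith [norm_nonneg (U ∘L TΨ ∘L R)]
  refine ⟨⟨1 / M1 ^ 2, by positivity, fun c => sq_aux hM1 (hb1 c) (norm_nonneg _) (norm_nonneg _)⟩, ?_, ?_⟩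
  -- Part 2 : U* TΦ bounded below
  · set M2 : ℝ := ‖TΨ ∘L R‖ + 1 with hM2def
    have hM2 : 0 < M2 := by positivity
    have hb2 : ∀ c : L2, ‖c‖ ≤ M2 * ‖(adjoint U ∘L TΦ) c‖ := by
      intro c
      apply norm_le_of_sq hM2
      calc ‖c‖ ^ 2 = ‖(inner ℂ (TΦ c) (U (TΨ (R c))) : ℂ)‖ := key c
        _ = ‖(inner ℂ ((adjoint U ∘L TΦ) c) (TΨ (R c)) : ℂ)‖ := by
            rw [comp_apply, adjoint_inner_left]
        _ ≤ ‖(adjoint U ∘L TΦ) c‖ * ‖TΨ (R c)‖ := norm_inner_le_norm _ _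
        _ ≤ ‖(adjoint U ∘L TΦ) c‖ * (M2 * ‖c‖) := by
            refine mul_le_mul_of_nonneg_left ?_ (norm_nonneg _)
            have := (TΨ ∘L R).le_opNorm c
            simp only [comp_apply] at this
            refine this.trans ?_
            nlinarith [norm_nonneg (TΨ ∘L R), norm_nonneg c]
    exact ⟨1 / M2 ^ 2, by positivity, fun c => sq_aux hM2 (hb2 c) (norm_nonneg _) (norm_nonneg _)⟩
  -- Part 3 : completeness gives Riesz basis and frame
  · intro hdense
    -- injective
    have hinj : Function.Injective ⇑TΦ := by
      intro x y hxy
      have : ‖x - y‖ ≤ M1 * ‖TΦ (x - y)‖ := hb1 _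
      rw [map_sub, hxy, sub_self, norm_zero, mul_zero] at this
      have := le_antisymm this (norm_nonneg _)
      exact sub_eq_zero.mp (norm_eq_zero.mp this)
    -- closed range, hence surjective
    have hanti : AntilipschitzWith (⟨M1, hM1.le⟩ : NNReal) ⇑TΦ :=
      TΦ.antilipschitz_of_bound (K := ⟨M1, hM1.le⟩) hb1
    have hclosed : IsClosed (Set.range ⇑TΦ) :=
      hanti.isClosed_range TΦ.uniformContinuous
    have hsurj : Function.Surjective ⇑TΦ := by
      intro f
      have : f ∈ Set.range ⇑TΦ := by
        rw [← hclosed.closure_eq]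
        exact hdense f
      exact this
    refine ⟨⟨hinj, hsurj⟩, ?_⟩
    -- adjoint identity : R* ∘ (UTΨ)* ∘ TΦ = id
    have hadj : ∀ c : L2, adjoint R (adjoint (U ∘L TΨ) (TΦ c)) = c := by
      intro c
      have h := congrArg ContinuousLinearMap.adjoint hR
      rw [adjoint_comp, adjoint_id] at h
      have h2 : adjoint (adjoint TΦ ∘L U ∘L TΨ) = adjoint (U ∘L TΨ) ∘L TΦ := by
        rw [show adjoint TΦ ∘L U ∘L TΨ = (adjoint TΦ) ∘L (U ∘L TΨ) from rfl,
          adjoint_comp, adjoint_adjoint]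
      rw [h2] at h
      have := congrArg (fun T : L2 →L[ℂ] L2 => T c) h
      simpa using this
    have hM3 : 0 < (‖TΦ‖ + 1) * (‖adjoint R‖ + 1) := by positivity
    have hb3 : ∀ f : H2,
        ‖f‖ ≤ (‖TΦ‖ + 1) * (‖adjoint R‖ + 1) * ‖adjoint (U ∘L TΨ) f‖ := by
      intro f
      obtain ⟨c, rfl⟩ := hsurj f
      have h1 : ‖TΦ c‖ ≤ ‖TΦ‖ * ‖c‖ := TΦ.le_opNorm c
      have h2 : ‖c‖ ≤ ‖adjoint R‖ * ‖adjoint (U ∘L TΨ) (TΦ c)‖ := by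
        conv_lhs => rw [← hadj c]
        exact (adjoint R).le_opNorm _
      nlinarith [norm_nonneg TΦ, norm_nonneg (adjoint R), norm_nonneg c,
        norm_nonneg (adjoint (U ∘L TΨ) (TΦ c))]
    exact ⟨1 / ((‖TΦ‖ + 1) * (‖adjoint R‖ + 1)) ^ 2, by positivity,
      fun f => sq_aux hM3 (hb3 f) (norm_nonneg _) (norm_nonneg _)⟩
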